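/- Suppose M > 0, c > 0, α1 > α2 > 0, α3 > 0, and M·α2·α3 > 4c. Let p_s* = (M·α1·α3 − 4c)/(2M·α3) and n* = (1/α3)·log(M·α2·α3/(4c)). Then (p_s*, n*) is a stationary point of the standalone profit function F(p_s, n) = M·p_s·(1 − p_s/q(n)) − n·c, i.e., both partial derivatives ∂F/∂p_s = M·(1 − 2p_s/q(n)) and ∂F/∂n = M·α2·α3·p_s²·exp(−α3·n)/q(n)² − c vanish at (p_s*, n*). -/

import Mathlib

open Real Set

/-- Under `M > 0`, `c > 0`, `α1 > α2 > 0`, `α3 > 0` and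
`M * α2 * α3 > 4 * c`, the point `(p_s*, n*)` with
`p_s* = (M * α1 * α3 - 4 * c) / (2 * M * α3)` and
`n* = (1 / α3) * log (M * α2 * α3 / (4 * c))` is a stationary point of the
standalone profit `F (p_s, n) = M * p_s * (1 - p_s / q n) - n * c`,
where `q n = α1 - α2 * exp (-α3 * n)`: both partial derivatives
`∂F/∂p_s = M * (1 - 2 * p_s / q n)` and
`∂F/∂n = M * α2 * α3 * p_s ^ 2 * exp (-α3 * n) / (q n) ^ 2 - c` vanish there. -/
theorem standalone_stationary_point (M c α1 α2 α3 : ℝ) (hM : 0 < M) (hc : 0 < c)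
    (hα12 : α2 < α1) (hα2 : 0 < α2) (hα3 : 0 < α3) (hcond : 4 * c < M * α2 * α3) :
    let q : ℝ → ℝ := fun n => α1 - α2 * Real.exp (-α3 * n)
    let F : ℝ → ℝ → ℝ := fun p_s n => M * p_s * (1 - p_s / q n) - n * c
    let ps : ℝ := (M * α1 * α3 - 4 * c) / (2 * M * α3)
    let ns : ℝ := (1 / α3) * Real.log (M * α2 * α3 / (4 * c))
    (HasDerivAt (fun p => F p ns) (M * (1 - 2 * ps / q ns)) ps ∧
      M * (1 - 2 * ps / q ns) = 0) ∧
    (HasDerivAt (fun n => F ps n)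
        (M * α2 * α3 * ps ^ 2 * Real.exp (-α3 * ns) / (q ns) ^ 2 - c) ns ∧
      M * α2 * α3 * ps ^ 2 * Real.exp (-α3 * ns) / (q ns) ^ 2 - c = 0) := by
  intro q F ps ns
  have hc' : (0:ℝ) < 4 * c := by linarith
  have hMa : (0:ℝ) < M * α2 * α3 := lt_trans hc' hcond
  have hx : (0:ℝ) < M * α2 * α3 / (4 * c) := div_pos hMa hc'
  have hE : Real.exp (-α3 * ns) = 4 * c / (M * α2 * α3) := by
    have h1 : -α3 * ns = -Real.log (M * α2 * α3 / (4 * c)) := by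
      show -α3 * ((1 / α3) * Real.log (M * α2 * α3 / (4 * c))) = _
      field_simp
    rw [h1, Real.exp_neg, Real.exp_log hx, ← one_div, one_div_div]
  have hps : 0 < ps := by
    have : 4 * c < M * α1 * α3 := by nlinarith
    exact div_pos (by linarith) (by positivity)
  have hq : q ns = 2 * ps := by
    show α1 - α2 * Real.exp (-α3 * ns) = 2 * ((M * α1 * α3 - 4 * c) / (2 * M * α3))
    rw [hE]
    field_simp
  have hqne : q ns ≠ 0 := by rw [hq]; positivity
  refine ⟨⟨?_, ?_⟩, ?_, ?_⟩
  · have h := ((((hasDerivAt_id ps).const_mul M).mul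
      (((hasDerivAt_id ps).div_const (q ns)).const_sub 1)).sub_const (ns * c))
    refine h.congr_deriv ?_
    simp only [id]
    field_simp
    ring
  · rw [hq]
    field_simp
    simp
  · have hq' : HasDerivAt q (α2 * α3 * Real.exp (-α3 * ns)) ns := by
      have he : HasDerivAt (fun n : ℝ => Real.exp (-α3 * n))
          (Real.exp (-α3 * ns) * (-α3)) ns := by
        exact (((hasDerivAt_id ns).const_mul (-α3)).exp).congr_deriv (by simp)
      have := (he.const_mul α2).const_sub α1
      refine this.congr_deriv ?_
      ring
    have hdiv : HasDerivAt (fun n => ps / q n)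
        ((0 * q ns - ps * (α2 * α3 * Real.exp (-α3 * ns))) / (q ns) ^ 2) ns :=
      (hasDerivAt_const ns ps).div hq' hqne
    have h := (((hdiv.const_sub 1).const_mul (M * ps)).sub
      ((hasDerivAt_id ns).mul_const c))
    refine h.congr_deriv ?_
    field_simp
    ring
  · rw [hE, hq]
    have hMne := hM.ne'
    have hα2ne := hα2.ne'
    have hα3ne := hα3.ne'
    have hpsne := hps.ne'
    field_simp
    ring
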